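/- Let C ⊂ P^{d−1} be a nondegenerate curve of degree d whose saturated ideal I_C is generated by quadrics (property C_2). Let S = ⟨p, C⟩ ⊂ P^d be the cone over C with vertex p. Then any line l through p not contained in S meets S in a scheme of length at most 2; i.e., l is at most a bisecant line to S. -/

import Mathlib

open MvPolynomial

/-- Hilbert function of the homogeneous ideal `I`: dimension of the degree-`k` piece of
the homogeneous coordinate ring. -/
noncomputable def hilbertFn {σ : Type} (I : Ideal (MvPolynomial σ ℂ)) (k : ℕ) : ℕ :=
  Module.finrank ℂ
    ((MvPolynomial.homogeneousSubmodule σ ℂ k) ⧸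
      (Submodule.comap (MvPolynomial.homogeneousSubmodule σ ℂ k).subtype
        (Submodule.restrictScalars ℂ I)))

/-- Restriction of a polynomial to the line through `[u]` and `[v]` in projective space,
written as a binary form in two new variables. -/
noncomputable def lineRestrict {σ : Type} (u v : σ → ℂ) :
    MvPolynomial σ ℂ →ₐ[ℂ] MvPolynomial (Fin 2) ℂ :=
  MvPolynomial.aeval fun i =>
    MvPolynomial.C (u i) * MvPolynomial.X 0 + MvPolynomial.C (v i) * MvPolynomial.X 1

lemma degree_eq_sum_univ' {k : ℕ} (m : Fin k →₀ ℕ) : m.degree = ∑ i, m i :=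
  Finset.sum_subset (Finset.subset_univ _) (fun i _ hi => Finsupp.notMem_support_iff.mp hi)

lemma aeval_line' {k n : ℕ} (f : MvPolynomial (Fin k) ℂ) (hf : f.IsHomogeneous n)
    (x : Fin k → ℂ) :
    (aeval (fun j => (C (x j) : MvPolynomial (Fin 2) ℂ) * X 0)) f
      = C (eval x f) * X 0 ^ n := by
  conv_lhs => rw [f.as_sum]
  conv_rhs => rw [f.as_sum]
  rw [map_sum, map_sum, map_sum, Finset.sum_mul]
  refine Finset.sum_congr rfl fun m hm => ?_
  have hdeg : ∑ i, m i = n := by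
    rw [← degree_eq_sum_univ', Finsupp.degree_eq_weight_one]
    exact hf (mem_support_iff.mp hm)
  rw [aeval_monomial, eval_monomial, Finsupp.prod_pow, Finsupp.prod_pow]
  simp only [mul_pow]
  rw [Finset.prod_mul_distrib, Finset.prod_pow_eq_pow_sum, hdeg]
  simp only [map_mul, map_prod, map_pow, algebraMap_eq]
  ring

/-- If the ideal contains `X 0 ^ 2`, the degree-`n` piece of the quotient has
dimension at most 2, for `n ≥ 2`. -/
lemma hilbert_le_two {J : Ideal (MvPolynomial (Fin 2) ℂ)}
    (hX2 : (X 0 : MvPolynomial (Fin 2) ℂ) ^ 2 ∈ J) {n : ℕ} (hn : 2 ≤ n) :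
    hilbertFn J n ≤ 2 := by
  unfold hilbertFn
  set V := homogeneousSubmodule (Fin 2) ℂ n with hV
  set W : Submodule ℂ V := Submodule.comap V.subtype (Submodule.restrictScalars ℂ J) with hW
  set m1 : MvPolynomial (Fin 2) ℂ :=
    monomial (Finsupp.single 0 1 + Finsupp.single 1 (n - 1)) 1 with hm1def
  set m2 : MvPolynomial (Fin 2) ℂ := monomial (Finsupp.single 1 n) 1 with hm2def
  have hm1 : m1 ∈ V := by
    rw [hV, mem_homogeneousSubmodule]
    refine isHomogeneous_monomial _ ?_
    rw [degree_eq_sum_univ']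
    simp [Fin.sum_univ_two, Finsupp.single_apply]
    omega
  have hm2 : m2 ∈ V := by
    rw [hV, mem_homogeneousSubmodule]
    refine isHomogeneous_monomial _ ?_
    rw [degree_eq_sum_univ']
    simp [Fin.sum_univ_two, Finsupp.single_apply]
  set e1 : V := ⟨m1, hm1⟩ with he1
  set e2 : V := ⟨m2, hm2⟩ with he2
  set q : Fin 2 → (V ⧸ W) := ![Submodule.Quotient.mk e1, Submodule.Quotient.mk e2] with hq
  have hspan : Submodule.span ℂ (Set.range q) = ⊤ := by
    rw [eq_top_iff]
    rintro qq -
    obtain ⟨v, rfl⟩ := Submodule.Quotient.mk_surjective W qq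
    have hv : (v : MvPolynomial (Fin 2) ℂ).IsHomogeneous n :=
      (mem_homogeneousSubmodule _ _).mp v.2
    have hval : (v : MvPolynomial (Fin 2) ℂ) ∈
        Submodule.span ℂ {m1, m2} ⊔ Submodule.restrictScalars ℂ J := by
      rw [(v : MvPolynomial (Fin 2) ℂ).as_sum]
      refine Submodule.sum_mem _ fun m hm => ?_
      have hdm : m 0 + m 1 = n := by
        have := hv (mem_support_iff.mp hm)
        rw [Pi.one_def, ← Finsupp.degree_eq_weight_one, degree_eq_sum_univ'] at this
        simpa [Fin.sum_univ_two] using this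
      by_cases h2 : 2 ≤ m 0
      · apply Submodule.mem_sup_right
        have heq : monomial m (coeff m (v : MvPolynomial (Fin 2) ℂ))
            = monomial (m - Finsupp.single 0 2) (coeff m (v : MvPolynomial (Fin 2) ℂ))
              * X 0 ^ 2 := by
          rw [X_pow_eq_monomial, monomial_mul, mul_one,
            tsub_add_cancel_of_le (Finsupp.single_le_iff.mpr h2)]
        show monomial m _ ∈ J
        rw [heq]
        exact Ideal.mul_mem_left J _ hX2
      · apply Submodule.mem_sup_left
        have hm0 : m 0 = 0 ∨ m 0 = 1 := by omega
        rcases hm0 with h0 | h0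
        · have hmeq : m = Finsupp.single 1 n := by
            ext i
            fin_cases i
            · simpa [Finsupp.single_apply] using h0
            · simp [Finsupp.single_apply]; omega
          have : monomial m (coeff m (v : MvPolynomial (Fin 2) ℂ))
              = coeff m (v : MvPolynomial (Fin 2) ℂ) • m2 := by
            rw [hm2def, smul_monomial, smul_eq_mul, mul_one, hmeq]
          rw [this]
          exact Submodule.smul_mem _ _ (Submodule.subset_span (by simp))
        · have hmeq : m = Finsupp.single 0 1 + Finsupp.single 1 (n - 1) := by
            ext i
            fin_cases i
            · simpa [Finsupp.single_apply] using h0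
            · simp [Finsupp.single_apply]; omega
          have : monomial m (coeff m (v : MvPolynomial (Fin 2) ℂ))
              = coeff m (v : MvPolynomial (Fin 2) ℂ) • m1 := by
            rw [hm1def, smul_monomial, smul_eq_mul, mul_one, hmeq]
          rw [this]
          exact Submodule.smul_mem _ _ (Submodule.subset_span (by simp))
    obtain ⟨a, ha, b, hb, hab⟩ := Submodule.mem_sup.mp hval
    obtain ⟨c1, c2, hc⟩ := Submodule.mem_span_pair.mp ha
    have key : (Submodule.Quotient.mk v : V ⧸ W)
        = c1 • (Submodule.Quotient.mk e1 : V ⧸ W) + c2 • Submodule.Quotient.mk e2 := by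
      rw [← Submodule.Quotient.mk_smul, ← Submodule.Quotient.mk_smul,
        ← Submodule.Quotient.mk_add, Submodule.Quotient.eq]
      show ((v - (c1 • e1 + c2 • e2) : V) : MvPolynomial (Fin 2) ℂ) ∈ J
      have hcoe : ((v - (c1 • e1 + c2 • e2) : V) : MvPolynomial (Fin 2) ℂ) = b := by
        have : ((v - (c1 • e1 + c2 • e2) : V) : MvPolynomial (Fin 2) ℂ)
            = (v : MvPolynomial (Fin 2) ℂ) - (c1 • m1 + c2 • m2) := by
          simp [he1, he2]
        rw [this, hc, ← hab]
        abel
      rw [hcoe]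
      exact hb
    rw [key]
    refine add_mem ?_ ?_
    · exact Submodule.smul_mem _ _ (Submodule.subset_span ⟨0, by simp [hq]⟩)
    · exact Submodule.smul_mem _ _ (Submodule.subset_span ⟨1, by simp [hq]⟩)
  simpa using finrank_le_of_span_eq_top hspan

/-- Let `C ⊂ P^{d-1}` be a nondegenerate curve whose saturated ideal is generated by the
quadrics `F`, and let `S ⊂ P^d` be the cone over `C` with vertex `p = (0:⋯:0:1)` (ideal
generated by `F` in one more variable). Any line through `p` and a point `(x:0) ∉ S`
meets `S` in a scheme of length `L ≤ 2` (length = eventual Hilbert function of the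
restriction of the cone ideal to the line). -/
theorem stmt_4 (d : ℕ) (hd : 3 ≤ d) (F : Set (MvPolynomial (Fin d) ℂ))
    (hquad : ∀ f ∈ F, f.IsHomogeneous 2)
    (hnd : ∀ f ∈ Ideal.span F, f.IsHomogeneous 1 → f = 0)
    (x : Fin d → ℂ)
    (hx : ∃ f ∈ F, MvPolynomial.eval x f ≠ 0)
    (L : ℕ)
    (hL : ∀ᶠ n in Filter.atTop,
      hilbertFn (Ideal.span (lineRestrict (Fin.snoc x 0) (Pi.single (Fin.last d) 1) ''
        ((fun f => MvPolynomial.rename Fin.castSucc f) '' F))) n = L) :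
    L ≤ 2 := by
  obtain ⟨f₀, hf₀F, hf₀x⟩ := hx
  set J : Ideal (MvPolynomial (Fin 2) ℂ) :=
    Ideal.span (lineRestrict (Fin.snoc x 0) (Pi.single (Fin.last d) 1) ''
      ((fun f => MvPolynomial.rename Fin.castSucc f) '' F)) with hJ
  have hg : lineRestrict (Fin.snoc x 0) (Pi.single (Fin.last d) 1)
      (rename Fin.castSucc f₀) ∈ J := Ideal.subset_span ⟨_, ⟨f₀, hf₀F, rfl⟩, rfl⟩
  have hgeq : lineRestrict (Fin.snoc x 0) (Pi.single (Fin.last d) 1)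
      (rename Fin.castSucc f₀) = C (eval x f₀) * X 0 ^ 2 := by
    rw [lineRestrict, aeval_rename]
    have hfun : ((fun i => C ((Fin.snoc x 0 : Fin (d + 1) → ℂ) i) * X 0 +
        C ((Pi.single (Fin.last d) 1 : Fin (d + 1) → ℂ) i) * X 1) ∘ Fin.castSucc)
        = fun j => (C (x j) : MvPolynomial (Fin 2) ℂ) * X 0 := by
      funext j
      simp [Function.comp, Fin.snoc_castSucc,
        Pi.single_eq_of_ne (Fin.castSucc_lt_last j).ne]
    rw [hfun, aeval_line' f₀ (hquad f₀ hf₀F) x]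
  have hX2 : (X 0 : MvPolynomial (Fin 2) ℂ) ^ 2 ∈ J := by
    have h := Ideal.mul_mem_left J (C (eval x f₀)⁻¹) hg
    rwa [hgeq, ← mul_assoc, ← map_mul, inv_mul_cancel₀ hf₀x, map_one, one_mul] at h
  obtain ⟨n, hLn, hn2⟩ := (hL.and (Filter.eventually_ge_atTop 2)).exists
  rw [← hLn]
  exact hilbert_le_two hX2 hn2
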